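/- The assignments 1 ↦ I₂, v₁ ↦ [[0,x],[x,0]], v₂ ↦ [[y,2y],[−2y,−y]], v₃ ↦ [[−2z,−z],[z,2z]] extend to an injective K-algebra homomorphism E^(3) → M₂(K[x,y,z]/(x²,y²,z²)); moreover this embedding sends v₁v₂v₃ to 3xyz·I₂, so it is not a constant-trace representation. -/

import Mathlib

variable (K : Type*) [Field K] [CharZero K]

/-- The truncated polynomial algebra `K[x,y,z]/(x²,y²,z²)`. -/
def TruncPoly3 : Type _ :=
  MvPolynomial (Fin 3) K ⧸
    Ideal.span {(MvPolynomial.X 0 : MvPolynomial (Fin 3) K) ^ 2,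
      MvPolynomial.X 1 ^ 2, MvPolynomial.X 2 ^ 2}

noncomputable instance : CommRing (TruncPoly3 K) := by unfold TruncPoly3; infer_instance
noncomputable instance : Algebra K (TruncPoly3 K) := by unfold TruncPoly3; infer_instance

/-- The residue classes of `x, y, z` in `K[x,y,z]/(x²,y²,z²)`. -/
noncomputable def xres (i : Fin 3) : TruncPoly3 K :=
  Ideal.Quotient.mk _ (MvPolynomial.X i)

open MvPolynomial

noncomputable abbrev TPIdeal : Ideal (MvPolynomial (Fin 3) K) :=
  Ideal.span {(X 0 : MvPolynomial (Fin 3) K) ^ 2, X 1 ^ 2, X 2 ^ 2}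

omit [CharZero K] in
lemma coeff_sq_mul_zero (s : Fin 3 →₀ ℕ) (hs : ∀ i, s i ≤ 1) (i : Fin 3)
    (f : MvPolynomial (Fin 3) K) : coeff s (f * X i ^ 2) = 0 := by
  rw [pow_two, ← mul_assoc, coeff_mul_X']
  split_ifs with h
  · rw [coeff_mul_X']
    have h0 : (s - Finsupp.single i 1 : Fin 3 →₀ ℕ) i = 0 := by
      have := hs i
      simp only [Finsupp.tsub_apply, Finsupp.single_apply, if_pos rfl, if_true]
      omega
    rw [if_neg]
    simp [Finsupp.mem_support_iff, h0]
  · rfl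

omit [CharZero K] in
lemma coeff_span_zero (s : Fin 3 →₀ ℕ) (hs : ∀ i, s i ≤ 1)
    (p : MvPolynomial (Fin 3) K) (hp : p ∈ TPIdeal K) : coeff s p = 0 := by
  rw [TPIdeal, Ideal.mem_span_insert] at hp
  obtain ⟨a, z, hz, rfl⟩ := hp
  rw [Ideal.mem_span_insert] at hz
  obtain ⟨b, w, hw, rfl⟩ := hz
  rw [Ideal.mem_span_singleton'] at hw
  obtain ⟨c, rfl⟩ := hw
  simp only [coeff_add]
  rw [coeff_sq_mul_zero K s hs, coeff_sq_mul_zero K s hs, coeff_sq_mul_zero K s hs]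
  ring

/-- coefficient functional on the truncated algebra -/
noncomputable def cf (s : Fin 3 →₀ ℕ) (hs : ∀ i, s i ≤ 1) : TruncPoly3 K →ₗ[K] K :=
  (Submodule.liftQ ((TPIdeal K).restrictScalars K) (MvPolynomial.lcoeff (R := K) s)
      (fun p hp => coeff_span_zero K s hs p hp)) ∘ₗ
    (Submodule.Quotient.restrictScalarsEquiv K (TPIdeal K)).symm.toLinearMap

omit [CharZero K] in
lemma cf_mk (s : Fin 3 →₀ ℕ) (hs : ∀ i, s i ≤ 1) (p : MvPolynomial (Fin 3) K) :
    cf K s hs (Ideal.Quotient.mk (TPIdeal K) p) = MvPolynomial.coeff s p := rfl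

omit [CharZero K] in
lemma xres_sq (i : Fin 3) : xres K i * xres K i = 0 := by
  have : xres K i * xres K i = Ideal.Quotient.mk (TPIdeal K) (X i ^ 2) := by
    rw [pow_two, map_mul]; rfl
  rw [this]; refine (Ideal.Quotient.eq_zero_iff_mem).2 ?_
  apply Ideal.subset_span
  fin_cases i <;> simp

/-- matrices -/
noncomputable def MA : Matrix (Fin 2) (Fin 2) (TruncPoly3 K) := !![0, xres K 0; xres K 0, 0]
noncomputable def MB : Matrix (Fin 2) (Fin 2) (TruncPoly3 K) :=
  !![xres K 1, 2 * xres K 1; -(2 * xres K 1), -(xres K 1)]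
noncomputable def MC : Matrix (Fin 2) (Fin 2) (TruncPoly3 K) :=
  !![-(2 * xres K 2), -(xres K 2); xres K 2, 2 * xres K 2]

noncomputable def fmap : (Fin 3 → K) →ₗ[K] Matrix (Fin 2) (Fin 2) (TruncPoly3 K) where
  toFun w := w 0 • MA K + w 1 • MB K + w 2 • MC K
  map_add' w v := by simp [add_smul]; abel
  map_smul' c w := by simp [smul_smul, smul_add]

omit [CharZero K] in
lemma fsq (w : Fin 3 → K) : fmap K w * fmap K w = 0 := by
  have p0 : xres K 0 ^ 2 = 0 := by rw [pow_two]; exact xres_sq K 0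
  have p1 : xres K 1 ^ 2 = 0 := by rw [pow_two]; exact xres_sq K 1
  have p2 : xres K 2 ^ 2 = 0 := by rw [pow_two]; exact xres_sq K 2
  ext i j
  fin_cases i <;> fin_cases j
  all_goals simp [fmap, MA, MB, MC, Matrix.mul_apply, Fin.sum_univ_two]
  all_goals simp only [Algebra.smul_def]
  all_goals (ring_nf; try simp [p0, p1, p2])

noncomputable def eps : ExteriorAlgebra K (Fin 3 → K) →ₐ[K] Matrix (Fin 2) (Fin 2) (TruncPoly3 K) :=
  ExteriorAlgebra.lift K ⟨fmap K, fsq K⟩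

noncomputable def ee (i : Fin 3) : ExteriorAlgebra K (Fin 3 → K) :=
  ExteriorAlgebra.ι K (Pi.single i 1)

omit [CharZero K] in
lemma eps_e (i : Fin 3) :
    eps K (ee K i) = if i = 0 then MA K else if i = 1 then MB K else MC K := by
  rw [eps, ee, ExteriorAlgebra.lift_ι_apply]
  fin_cases i <;> simp [fmap, Pi.single_apply]

omit [CharZero K] in lemma eps_e0 : eps K (ee K 0) = MA K := by simpa using eps_e K 0
omit [CharZero K] in lemma eps_e1 : eps K (ee K 1) = MB K := by simpa using eps_e K 1
omit [CharZero K] in lemma eps_e2 : eps K (ee K 2) = MC K := by simpa using eps_e K 2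

/-- monomial residues -/
noncomputable def w01 : TruncPoly3 K := Ideal.Quotient.mk (TPIdeal K) (X 0 * X 1)
noncomputable def w02 : TruncPoly3 K := Ideal.Quotient.mk (TPIdeal K) (X 0 * X 2)
noncomputable def w12 : TruncPoly3 K := Ideal.Quotient.mk (TPIdeal K) (X 1 * X 2)
noncomputable def w012 : TruncPoly3 K := Ideal.Quotient.mk (TPIdeal K) (X 0 * X 1 * X 2)

omit [CharZero K] in
lemma xres_mul01 : xres K 0 * xres K 1 = w01 K := by rw [w01, map_mul]; rfl
omit [CharZero K] in
lemma xres_mul02 : xres K 0 * xres K 2 = w02 K := by rw [w02, map_mul]; rfl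
omit [CharZero K] in
lemma xres_mul12 : xres K 1 * xres K 2 = w12 K := by rw [w12, map_mul]; rfl
omit [CharZero K] in
lemma xres_mul012 : xres K 0 * xres K 1 * xres K 2 = w012 K := by
  rw [w012, map_mul, map_mul]; rfl

omit [CharZero K] in
lemma prodAB : MA K * MB K =
    !![(-2 : K) • w01 K, (-1 : K) • w01 K; (1 : K) • w01 K, (2 : K) • w01 K] := by
  rw [← xres_mul01]
  ext i j
  fin_cases i <;> fin_cases j <;>
    simp [MA, MB, Matrix.mul_apply, Fin.sum_univ_two, Algebra.smul_def, map_neg, map_ofNat,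
      map_one] <;> ring

omit [CharZero K] in
lemma prodAC : MA K * MC K =
    !![(1 : K) • w02 K, (2 : K) • w02 K; (-2 : K) • w02 K, (-1 : K) • w02 K] := by
  rw [← xres_mul02]
  ext i j
  fin_cases i <;> fin_cases j <;>
    simp [MA, MC, Matrix.mul_apply, Fin.sum_univ_two, Algebra.smul_def, map_neg, map_ofNat,
      map_one] <;> ring

omit [CharZero K] in
lemma prodBC : MB K * MC K =
    !![(0 : TruncPoly3 K), (3 : K) • w12 K; (3 : K) • w12 K, 0] := by
  have h2 := xres_sq K 2
  rw [← xres_mul12]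
  ext i j
  fin_cases i <;> fin_cases j <;>
    simp [MB, MC, Matrix.mul_apply, Fin.sum_univ_two, Algebra.smul_def, map_neg, map_ofNat,
      map_one] <;> ring

omit [CharZero K] in
lemma prodABC : MA K * MB K * MC K =
    !![(3 : K) • w012 K, 0; 0, (3 : K) • w012 K] := by
  rw [prodAB]
  ext i j
  fin_cases i <;> fin_cases j <;>
    simp [MC, Matrix.mul_apply, Fin.sum_univ_two, Algebra.smul_def, map_neg, map_ofNat,
      map_one, ← xres_mul01, ← xres_mul012] <;> ring

omit [CharZero K] in
lemma eps_e01 : eps K (ee K 0 * ee K 1) =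
    !![(-2 : K) • w01 K, (-1 : K) • w01 K; (1 : K) • w01 K, (2 : K) • w01 K] := by
  rw [map_mul, eps_e0, eps_e1, prodAB]

omit [CharZero K] in
lemma eps_e02 : eps K (ee K 0 * ee K 2) =
    !![(1 : K) • w02 K, (2 : K) • w02 K; (-2 : K) • w02 K, (-1 : K) • w02 K] := by
  rw [map_mul, eps_e0, eps_e2, prodAC]

omit [CharZero K] in
lemma eps_e12 : eps K (ee K 1 * ee K 2) =
    !![(0 : TruncPoly3 K), (3 : K) • w12 K; (3 : K) • w12 K, 0] := by
  rw [map_mul, eps_e1, eps_e2, prodBC]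

omit [CharZero K] in
lemma eps_e012 : eps K (ee K 0 * ee K 1 * ee K 2) =
    !![(3 : K) • w012 K, 0; 0, (3 : K) • w012 K] := by
  rw [map_mul, map_mul, eps_e0, eps_e1, eps_e2]
  exact prodABC K

omit [CharZero K] in
lemma esq (i : Fin 3) : ee K i * ee K i = 0 := ExteriorAlgebra.ι_sq_zero _

omit [CharZero K] in
lemma eswap (i j : Fin 3) : ee K i * ee K j = -(ee K j * ee K i) := by
  exact eq_neg_of_add_eq_zero_left
    (ExteriorAlgebra.ι_add_mul_swap (R := K) (Pi.single i 1 : Fin 3 → K) (Pi.single j 1))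

/-- the spanning submodule -/
noncomputable def SpanS : Submodule K (ExteriorAlgebra K (Fin 3 → K)) :=
  Submodule.span K {1, ee K 0, ee K 1, ee K 2, ee K 0 * ee K 1, ee K 0 * ee K 2,
    ee K 1 * ee K 2, ee K 0 * ee K 1 * ee K 2}

omit [CharZero K] in
lemma memS (g : ExteriorAlgebra K (Fin 3 → K))
    (hg : g ∈ ({1, ee K 0, ee K 1, ee K 2, ee K 0 * ee K 1, ee K 0 * ee K 2,
      ee K 1 * ee K 2, ee K 0 * ee K 1 * ee K 2} : Set (ExteriorAlgebra K (Fin 3 → K)))) :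
    g ∈ SpanS K := Submodule.subset_span hg

omit [CharZero K] in lemma hg0 : (1 : ExteriorAlgebra K (Fin 3 → K)) ∈ SpanS K := memS K _ (by simp)
omit [CharZero K] in lemma hg1 : ee K 0 ∈ SpanS K := memS K _ (by simp)
omit [CharZero K] in lemma hg2 : ee K 1 ∈ SpanS K := memS K _ (by simp)
omit [CharZero K] in lemma hg3 : ee K 2 ∈ SpanS K := memS K _ (by simp)
omit [CharZero K] in lemma hg4 : ee K 0 * ee K 1 ∈ SpanS K := memS K _ (by simp)
omit [CharZero K] in lemma hg5 : ee K 0 * ee K 2 ∈ SpanS K := memS K _ (by simp)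
omit [CharZero K] in lemma hg6 : ee K 1 * ee K 2 ∈ SpanS K := memS K _ (by simp)
omit [CharZero K] in lemma hg7 : ee K 0 * ee K 1 * ee K 2 ∈ SpanS K :=
  memS K _ (by simp [Set.mem_insert_iff])

omit [CharZero K] in
lemma emulS (i : Fin 3) {s : ExteriorAlgebra K (Fin 3 → K)} (hs : s ∈ SpanS K) :
    ee K i * s ∈ SpanS K := by
  induction hs using Submodule.span_induction with
  | zero => rw [mul_zero]; exact (SpanS K).zero_mem
  | add x y hx hy ihx ihy => rw [mul_add]; exact (SpanS K).add_mem ihx ihy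
  | smul a x hx ihx => rw [mul_smul_comm]; exact (SpanS K).smul_mem a ihx
  | mem g hgmem =>
    simp only [Set.mem_insert_iff, Set.mem_singleton_iff] at hgmem
    have h10 : ee K 1 * (ee K 0 * ee K 1) = 0 := by
      rw [← mul_assoc, eswap K 1 0, neg_mul, mul_assoc, esq, mul_zero, neg_zero]
    have h201 : ee K 2 * (ee K 0 * ee K 1) = ee K 0 * ee K 1 * ee K 2 := by
      rw [← mul_assoc, eswap K 2 0, neg_mul, mul_assoc, eswap K 2 1, mul_neg, neg_neg,
        ← mul_assoc]
    have hi : i = 0 ∨ i = 1 ∨ i = 2 := by fin_cases i <;> simp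
    rcases hi with rfl | rfl | rfl <;>
      rcases hgmem with rfl | rfl | rfl | rfl | rfl | rfl | rfl | rfl
    · rw [mul_one]; exact hg1 K
    · rw [esq]; exact (SpanS K).zero_mem
    · exact hg4 K
    · exact hg5 K
    · rw [← mul_assoc, esq, zero_mul]; exact (SpanS K).zero_mem
    · rw [← mul_assoc, esq, zero_mul]; exact (SpanS K).zero_mem
    · rw [← mul_assoc]; exact hg7 K
    · rw [← mul_assoc, ← mul_assoc, esq, zero_mul, zero_mul]; exact (SpanS K).zero_mem
    · rw [mul_one]; exact hg2 K
    · rw [eswap]; exact (SpanS K).neg_mem (hg4 K)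
    · rw [esq]; exact (SpanS K).zero_mem
    · exact hg6 K
    · rw [h10]; exact (SpanS K).zero_mem
    · rw [← mul_assoc, eswap K 1 0, neg_mul, mul_assoc, ← mul_assoc]
      exact (SpanS K).neg_mem (hg7 K)
    · rw [← mul_assoc, esq, zero_mul]; exact (SpanS K).zero_mem
    · rw [← mul_assoc, h10, zero_mul]; exact (SpanS K).zero_mem
    · rw [mul_one]; exact hg3 K
    · rw [eswap]; exact (SpanS K).neg_mem (hg5 K)
    · rw [eswap]; exact (SpanS K).neg_mem (hg6 K)
    · rw [esq]; exact (SpanS K).zero_mem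
    · rw [h201]; exact hg7 K
    · rw [← mul_assoc, eswap K 2 0, neg_mul, mul_assoc, esq, mul_zero, neg_zero]
      exact (SpanS K).zero_mem
    · rw [← mul_assoc, eswap K 2 1, neg_mul, mul_assoc, esq, mul_zero, neg_zero]
      exact (SpanS K).zero_mem
    · rw [← mul_assoc, h201, mul_assoc, esq, mul_zero]; exact (SpanS K).zero_mem

omit [CharZero K] in
lemma mulS {a b : ExteriorAlgebra K (Fin 3 → K)} (ha : a ∈ SpanS K) (hb : b ∈ SpanS K) :
    a * b ∈ SpanS K := by
  induction ha using Submodule.span_induction with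
  | zero => rw [zero_mul]; exact (SpanS K).zero_mem
  | add x y hx hy ihx ihy => rw [add_mul]; exact (SpanS K).add_mem ihx ihy
  | smul a x hx ihx => rw [smul_mul_assoc]; exact (SpanS K).smul_mem a ihx
  | mem g hgmem =>
    simp only [Set.mem_insert_iff, Set.mem_singleton_iff] at hgmem
    rcases hgmem with rfl | rfl | rfl | rfl | rfl | rfl | rfl | rfl
    · rw [one_mul]; exact hb
    · exact emulS K 0 hb
    · exact emulS K 1 hb
    · exact emulS K 2 hb
    · rw [mul_assoc]; exact emulS K 0 (emulS K 1 hb)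
    · rw [mul_assoc]; exact emulS K 0 (emulS K 2 hb)
    · rw [mul_assoc]; exact emulS K 1 (emulS K 2 hb)
    · rw [mul_assoc, mul_assoc]; exact emulS K 0 (emulS K 1 (emulS K 2 hb))

omit [CharZero K] in
lemma spanS_top : SpanS K = ⊤ := by
  rw [Submodule.eq_top_iff']
  intro a
  induction a using ExteriorAlgebra.induction with
  | algebraMap r => rw [Algebra.algebraMap_eq_smul_one]; exact (SpanS K).smul_mem r (hg0 K)
  | add a b ha hb => exact (SpanS K).add_mem ha hb
  | mul a b ha hb => exact mulS K ha hb
  | ι m =>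
    have hm : m = m 0 • (Pi.single 0 1 : Fin 3 → K) + m 1 • (Pi.single 1 1 : Fin 3 → K) +
        m 2 • (Pi.single 2 1 : Fin 3 → K) := by
      ext j; fin_cases j <;> simp [Pi.single_apply]
    rw [hm, map_add, map_add, map_smul, map_smul, map_smul]
    exact (SpanS K).add_mem ((SpanS K).add_mem ((SpanS K).smul_mem _ (hg1 K))
      ((SpanS K).smul_mem _ (hg2 K))) ((SpanS K).smul_mem _ (hg3 K))

/-- exponent vectors -/
noncomputable def sgl (i : Fin 3) : Fin 3 →₀ ℕ := Finsupp.single i 1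

omit [CharZero K] in
lemma hs_zero : ∀ i : Fin 3, (0 : Fin 3 →₀ ℕ) i ≤ 1 := by intro i; simp
lemma hs_sgl (j : Fin 3) : ∀ i : Fin 3, sgl j i ≤ 1 := by
  intro i; simp [sgl, Finsupp.single_apply]; split <;> omega
lemma hs_add2 (j k : Fin 3) (h : j ≠ k) : ∀ i : Fin 3, (sgl j + sgl k) i ≤ 1 := by
  intro i
  simp only [Finsupp.add_apply, sgl, Finsupp.single_apply]
  fin_cases i <;> fin_cases j <;> fin_cases k <;> simp_all
lemma hs_add3 : ∀ i : Fin 3, (sgl 0 + sgl 1 + sgl 2) i ≤ 1 := by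
  intro i
  simp only [Finsupp.add_apply, sgl, Finsupp.single_apply]
  fin_cases i <;> simp

noncomputable def c1 : TruncPoly3 K →ₗ[K] K := cf K 0 hs_zero
noncomputable def cx : TruncPoly3 K →ₗ[K] K := cf K (sgl 0) (hs_sgl 0)
noncomputable def cy : TruncPoly3 K →ₗ[K] K := cf K (sgl 1) (hs_sgl 1)
noncomputable def cz : TruncPoly3 K →ₗ[K] K := cf K (sgl 2) (hs_sgl 2)
noncomputable def cxy : TruncPoly3 K →ₗ[K] K := cf K (sgl 0 + sgl 1) (hs_add2 0 1 (by decide))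
noncomputable def cxz : TruncPoly3 K →ₗ[K] K := cf K (sgl 0 + sgl 2) (hs_add2 0 2 (by decide))
noncomputable def cyz : TruncPoly3 K →ₗ[K] K := cf K (sgl 1 + sgl 2) (hs_add2 1 2 (by decide))
noncomputable def cxyz : TruncPoly3 K →ₗ[K] K := cf K (sgl 0 + sgl 1 + sgl 2) hs_add3

noncomputable def phi : Matrix (Fin 2) (Fin 2) (TruncPoly3 K) →ₗ[K] ExteriorAlgebra K (Fin 3 → K) where
  toFun M := c1 K (M 0 0) • (1 : ExteriorAlgebra K (Fin 3 → K)) + cx K (M 0 1) • ee K 0 +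
    cy K (M 0 0) • ee K 1 + (-(2 : K)⁻¹ * cz K (M 0 0)) • ee K 2 +
    (-(2 : K)⁻¹ * cxy K (M 0 0)) • (ee K 0 * ee K 1) + cxz K (M 0 0) • (ee K 0 * ee K 2) +
    ((3 : K)⁻¹ * cyz K (M 0 1)) • (ee K 1 * ee K 2) +
    ((3 : K)⁻¹ * cxyz K (M 0 0)) • (ee K 0 * ee K 1 * ee K 2)
  map_add' M N := by
    simp only [Matrix.add_apply, map_add, add_smul, mul_add]
    abel
  map_smul' c M := by
    simp only [Matrix.smul_apply, map_smul, smul_eq_mul, RingHom.id_apply, smul_add, smul_smul]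
    module

omit [CharZero K] in
lemma two_mul_res (r : TruncPoly3 K) : (2 : TruncPoly3 K) * r = (2 : K) • r := by
  rw [Algebra.smul_def, map_ofNat]

omit [CharZero K] in
lemma one_mk : (1 : TruncPoly3 K) = Ideal.Quotient.mk (TPIdeal K) 1 := rfl

omit [CharZero K] in
@[simp] lemma cv_c1_one : c1 K ((1 : TruncPoly3 K)) = 1 := by
  simp only [c1, one_mk, cf_mk]
  simp [sgl, MvPolynomial.coeff_mul_X', MvPolynomial.coeff_X', MvPolynomial.coeff_zero_X,
    MvPolynomial.coeff_one, Finsupp.mem_support_iff, Finsupp.single_apply, Finsupp.ext_iff,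
    Fin.forall_fin_succ, Finsupp.single_eq_zero]

omit [CharZero K] in
@[simp] lemma cv_c1_x0 : c1 K (xres K 0) = 0 := by
  simp only [c1, xres, cf_mk]
  simp [sgl, MvPolynomial.coeff_mul_X', MvPolynomial.coeff_X', MvPolynomial.coeff_zero_X,
    MvPolynomial.coeff_one, Finsupp.mem_support_iff, Finsupp.single_apply, Finsupp.ext_iff,
    Fin.forall_fin_succ, Finsupp.single_eq_zero]

omit [CharZero K] in
@[simp] lemma cv_c1_x1 : c1 K (xres K 1) = 0 := by
  simp only [c1, xres, cf_mk]
  simp [sgl, MvPolynomial.coeff_mul_X', MvPolynomial.coeff_X', MvPolynomial.coeff_zero_X,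
    MvPolynomial.coeff_one, Finsupp.mem_support_iff, Finsupp.single_apply, Finsupp.ext_iff,
    Fin.forall_fin_succ, Finsupp.single_eq_zero]

omit [CharZero K] in
@[simp] lemma cv_c1_x2 : c1 K (xres K 2) = 0 := by
  simp only [c1, xres, cf_mk]
  simp [sgl, MvPolynomial.coeff_mul_X', MvPolynomial.coeff_X', MvPolynomial.coeff_zero_X,
    MvPolynomial.coeff_one, Finsupp.mem_support_iff, Finsupp.single_apply, Finsupp.ext_iff,
    Fin.forall_fin_succ, Finsupp.single_eq_zero]

omit [CharZero K] in
@[simp] lemma cv_c1_w01 : c1 K (w01 K) = 0 := by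
  simp only [c1, w01, cf_mk]
  simp [sgl, MvPolynomial.coeff_mul_X', MvPolynomial.coeff_X', MvPolynomial.coeff_zero_X,
    MvPolynomial.coeff_one, Finsupp.mem_support_iff, Finsupp.single_apply, Finsupp.ext_iff,
    Fin.forall_fin_succ, Finsupp.single_eq_zero]

omit [CharZero K] in
@[simp] lemma cv_c1_w02 : c1 K (w02 K) = 0 := by
  simp only [c1, w02, cf_mk]
  simp [sgl, MvPolynomial.coeff_mul_X', MvPolynomial.coeff_X', MvPolynomial.coeff_zero_X,
    MvPolynomial.coeff_one, Finsupp.mem_support_iff, Finsupp.single_apply, Finsupp.ext_iff,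
    Fin.forall_fin_succ, Finsupp.single_eq_zero]

omit [CharZero K] in
@[simp] lemma cv_c1_w12 : c1 K (w12 K) = 0 := by
  simp only [c1, w12, cf_mk]
  simp [sgl, MvPolynomial.coeff_mul_X', MvPolynomial.coeff_X', MvPolynomial.coeff_zero_X,
    MvPolynomial.coeff_one, Finsupp.mem_support_iff, Finsupp.single_apply, Finsupp.ext_iff,
    Fin.forall_fin_succ, Finsupp.single_eq_zero]

omit [CharZero K] in
@[simp] lemma cv_c1_w012 : c1 K (w012 K) = 0 := by
  simp only [c1, w012, cf_mk]
  simp [sgl, MvPolynomial.coeff_mul_X', MvPolynomial.coeff_X', MvPolynomial.coeff_zero_X,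
    MvPolynomial.coeff_one, Finsupp.mem_support_iff, Finsupp.single_apply, Finsupp.ext_iff,
    Fin.forall_fin_succ, Finsupp.single_eq_zero]

omit [CharZero K] in
@[simp] lemma cv_cx_one : cx K ((1 : TruncPoly3 K)) = 0 := by
  simp only [cx, one_mk, cf_mk]
  simp [sgl, MvPolynomial.coeff_mul_X', MvPolynomial.coeff_X', MvPolynomial.coeff_zero_X,
    MvPolynomial.coeff_one, Finsupp.mem_support_iff, Finsupp.single_apply, Finsupp.ext_iff,
    Fin.forall_fin_succ, Finsupp.single_eq_zero]

omit [CharZero K] in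
@[simp] lemma cv_cx_x0 : cx K (xres K 0) = 1 := by
  simp only [cx, xres, cf_mk]
  simp [sgl, MvPolynomial.coeff_mul_X', MvPolynomial.coeff_X', MvPolynomial.coeff_zero_X,
    MvPolynomial.coeff_one, Finsupp.mem_support_iff, Finsupp.single_apply, Finsupp.ext_iff,
    Fin.forall_fin_succ, Finsupp.single_eq_zero]

omit [CharZero K] in
@[simp] lemma cv_cx_x1 : cx K (xres K 1) = 0 := by
  simp only [cx, xres, cf_mk]
  simp [sgl, MvPolynomial.coeff_mul_X', MvPolynomial.coeff_X', MvPolynomial.coeff_zero_X,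
    MvPolynomial.coeff_one, Finsupp.mem_support_iff, Finsupp.single_apply, Finsupp.ext_iff,
    Fin.forall_fin_succ, Finsupp.single_eq_zero]

omit [CharZero K] in
@[simp] lemma cv_cx_x2 : cx K (xres K 2) = 0 := by
  simp only [cx, xres, cf_mk]
  simp [sgl, MvPolynomial.coeff_mul_X', MvPolynomial.coeff_X', MvPolynomial.coeff_zero_X,
    MvPolynomial.coeff_one, Finsupp.mem_support_iff, Finsupp.single_apply, Finsupp.ext_iff,
    Fin.forall_fin_succ, Finsupp.single_eq_zero]

omit [CharZero K] in
@[simp] lemma cv_cx_w01 : cx K (w01 K) = 0 := by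
  simp only [cx, w01, cf_mk]
  simp [sgl, MvPolynomial.coeff_mul_X', MvPolynomial.coeff_X', MvPolynomial.coeff_zero_X,
    MvPolynomial.coeff_one, Finsupp.mem_support_iff, Finsupp.single_apply, Finsupp.ext_iff,
    Fin.forall_fin_succ, Finsupp.single_eq_zero]

omit [CharZero K] in
@[simp] lemma cv_cx_w02 : cx K (w02 K) = 0 := by
  simp only [cx, w02, cf_mk]
  simp [sgl, MvPolynomial.coeff_mul_X', MvPolynomial.coeff_X', MvPolynomial.coeff_zero_X,
    MvPolynomial.coeff_one, Finsupp.mem_support_iff, Finsupp.single_apply, Finsupp.ext_iff,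
    Fin.forall_fin_succ, Finsupp.single_eq_zero]

omit [CharZero K] in
@[simp] lemma cv_cx_w12 : cx K (w12 K) = 0 := by
  simp only [cx, w12, cf_mk]
  simp [sgl, MvPolynomial.coeff_mul_X', MvPolynomial.coeff_X', MvPolynomial.coeff_zero_X,
    MvPolynomial.coeff_one, Finsupp.mem_support_iff, Finsupp.single_apply, Finsupp.ext_iff,
    Fin.forall_fin_succ, Finsupp.single_eq_zero]

omit [CharZero K] in
@[simp] lemma cv_cx_w012 : cx K (w012 K) = 0 := by
  simp only [cx, w012, cf_mk]
  simp [sgl, MvPolynomial.coeff_mul_X', MvPolynomial.coeff_X', MvPolynomial.coeff_zero_X,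
    MvPolynomial.coeff_one, Finsupp.mem_support_iff, Finsupp.single_apply, Finsupp.ext_iff,
    Fin.forall_fin_succ, Finsupp.single_eq_zero]

omit [CharZero K] in
@[simp] lemma cv_cy_one : cy K ((1 : TruncPoly3 K)) = 0 := by
  simp only [cy, one_mk, cf_mk]
  simp [sgl, MvPolynomial.coeff_mul_X', MvPolynomial.coeff_X', MvPolynomial.coeff_zero_X,
    MvPolynomial.coeff_one, Finsupp.mem_support_iff, Finsupp.single_apply, Finsupp.ext_iff,
    Fin.forall_fin_succ, Finsupp.single_eq_zero]

omit [CharZero K] in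
@[simp] lemma cv_cy_x0 : cy K (xres K 0) = 0 := by
  simp only [cy, xres, cf_mk]
  simp [sgl, MvPolynomial.coeff_mul_X', MvPolynomial.coeff_X', MvPolynomial.coeff_zero_X,
    MvPolynomial.coeff_one, Finsupp.mem_support_iff, Finsupp.single_apply, Finsupp.ext_iff,
    Fin.forall_fin_succ, Finsupp.single_eq_zero]

omit [CharZero K] in
@[simp] lemma cv_cy_x1 : cy K (xres K 1) = 1 := by
  simp only [cy, xres, cf_mk]
  simp [sgl, MvPolynomial.coeff_mul_X', MvPolynomial.coeff_X', MvPolynomial.coeff_zero_X,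
    MvPolynomial.coeff_one, Finsupp.mem_support_iff, Finsupp.single_apply, Finsupp.ext_iff,
    Fin.forall_fin_succ, Finsupp.single_eq_zero]

omit [CharZero K] in
@[simp] lemma cv_cy_x2 : cy K (xres K 2) = 0 := by
  simp only [cy, xres, cf_mk]
  simp [sgl, MvPolynomial.coeff_mul_X', MvPolynomial.coeff_X', MvPolynomial.coeff_zero_X,
    MvPolynomial.coeff_one, Finsupp.mem_support_iff, Finsupp.single_apply, Finsupp.ext_iff,
    Fin.forall_fin_succ, Finsupp.single_eq_zero]

omit [CharZero K] in
@[simp] lemma cv_cy_w01 : cy K (w01 K) = 0 := by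
  simp only [cy, w01, cf_mk]
  simp [sgl, MvPolynomial.coeff_mul_X', MvPolynomial.coeff_X', MvPolynomial.coeff_zero_X,
    MvPolynomial.coeff_one, Finsupp.mem_support_iff, Finsupp.single_apply, Finsupp.ext_iff,
    Fin.forall_fin_succ, Finsupp.single_eq_zero]

omit [CharZero K] in
@[simp] lemma cv_cy_w02 : cy K (w02 K) = 0 := by
  simp only [cy, w02, cf_mk]
  simp [sgl, MvPolynomial.coeff_mul_X', MvPolynomial.coeff_X', MvPolynomial.coeff_zero_X,
    MvPolynomial.coeff_one, Finsupp.mem_support_iff, Finsupp.single_apply, Finsupp.ext_iff,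
    Fin.forall_fin_succ, Finsupp.single_eq_zero]

omit [CharZero K] in
@[simp] lemma cv_cy_w12 : cy K (w12 K) = 0 := by
  simp only [cy, w12, cf_mk]
  simp [sgl, MvPolynomial.coeff_mul_X', MvPolynomial.coeff_X', MvPolynomial.coeff_zero_X,
    MvPolynomial.coeff_one, Finsupp.mem_support_iff, Finsupp.single_apply, Finsupp.ext_iff,
    Fin.forall_fin_succ, Finsupp.single_eq_zero]

omit [CharZero K] in
@[simp] lemma cv_cy_w012 : cy K (w012 K) = 0 := by
  simp only [cy, w012, cf_mk]
  simp [sgl, MvPolynomial.coeff_mul_X', MvPolynomial.coeff_X', MvPolynomial.coeff_zero_X,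
    MvPolynomial.coeff_one, Finsupp.mem_support_iff, Finsupp.single_apply, Finsupp.ext_iff,
    Fin.forall_fin_succ, Finsupp.single_eq_zero]

omit [CharZero K] in
@[simp] lemma cv_cz_one : cz K ((1 : TruncPoly3 K)) = 0 := by
  simp only [cz, one_mk, cf_mk]
  simp [sgl, MvPolynomial.coeff_mul_X', MvPolynomial.coeff_X', MvPolynomial.coeff_zero_X,
    MvPolynomial.coeff_one, Finsupp.mem_support_iff, Finsupp.single_apply, Finsupp.ext_iff,
    Fin.forall_fin_succ, Finsupp.single_eq_zero]

omit [CharZero K] in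
@[simp] lemma cv_cz_x0 : cz K (xres K 0) = 0 := by
  simp only [cz, xres, cf_mk]
  simp [sgl, MvPolynomial.coeff_mul_X', MvPolynomial.coeff_X', MvPolynomial.coeff_zero_X,
    MvPolynomial.coeff_one, Finsupp.mem_support_iff, Finsupp.single_apply, Finsupp.ext_iff,
    Fin.forall_fin_succ, Finsupp.single_eq_zero]

omit [CharZero K] in
@[simp] lemma cv_cz_x1 : cz K (xres K 1) = 0 := by
  simp only [cz, xres, cf_mk]
  simp [sgl, MvPolynomial.coeff_mul_X', MvPolynomial.coeff_X', MvPolynomial.coeff_zero_X,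
    MvPolynomial.coeff_one, Finsupp.mem_support_iff, Finsupp.single_apply, Finsupp.ext_iff,
    Fin.forall_fin_succ, Finsupp.single_eq_zero]

omit [CharZero K] in
@[simp] lemma cv_cz_x2 : cz K (xres K 2) = 1 := by
  simp only [cz, xres, cf_mk]
  simp [sgl, MvPolynomial.coeff_mul_X', MvPolynomial.coeff_X', MvPolynomial.coeff_zero_X,
    MvPolynomial.coeff_one, Finsupp.mem_support_iff, Finsupp.single_apply, Finsupp.ext_iff,
    Fin.forall_fin_succ, Finsupp.single_eq_zero]

omit [CharZero K] in
@[simp] lemma cv_cz_w01 : cz K (w01 K) = 0 := by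
  simp only [cz, w01, cf_mk]
  simp [sgl, MvPolynomial.coeff_mul_X', MvPolynomial.coeff_X', MvPolynomial.coeff_zero_X,
    MvPolynomial.coeff_one, Finsupp.mem_support_iff, Finsupp.single_apply, Finsupp.ext_iff,
    Fin.forall_fin_succ, Finsupp.single_eq_zero]

omit [CharZero K] in
@[simp] lemma cv_cz_w02 : cz K (w02 K) = 0 := by
  simp only [cz, w02, cf_mk]
  simp [sgl, MvPolynomial.coeff_mul_X', MvPolynomial.coeff_X', MvPolynomial.coeff_zero_X,
    MvPolynomial.coeff_one, Finsupp.mem_support_iff, Finsupp.single_apply, Finsupp.ext_iff,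
    Fin.forall_fin_succ, Finsupp.single_eq_zero]

omit [CharZero K] in
@[simp] lemma cv_cz_w12 : cz K (w12 K) = 0 := by
  simp only [cz, w12, cf_mk]
  simp [sgl, MvPolynomial.coeff_mul_X', MvPolynomial.coeff_X', MvPolynomial.coeff_zero_X,
    MvPolynomial.coeff_one, Finsupp.mem_support_iff, Finsupp.single_apply, Finsupp.ext_iff,
    Fin.forall_fin_succ, Finsupp.single_eq_zero]

omit [CharZero K] in
@[simp] lemma cv_cz_w012 : cz K (w012 K) = 0 := by
  simp only [cz, w012, cf_mk]
  simp [sgl, MvPolynomial.coeff_mul_X', MvPolynomial.coeff_X', MvPolynomial.coeff_zero_X,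
    MvPolynomial.coeff_one, Finsupp.mem_support_iff, Finsupp.single_apply, Finsupp.ext_iff,
    Fin.forall_fin_succ, Finsupp.single_eq_zero]

omit [CharZero K] in
@[simp] lemma cv_cxy_one : cxy K ((1 : TruncPoly3 K)) = 0 := by
  simp only [cxy, one_mk, cf_mk]
  simp [sgl, MvPolynomial.coeff_mul_X', MvPolynomial.coeff_X', MvPolynomial.coeff_zero_X,
    MvPolynomial.coeff_one, Finsupp.mem_support_iff, Finsupp.single_apply, Finsupp.ext_iff,
    Fin.forall_fin_succ, Finsupp.single_eq_zero]

omit [CharZero K] in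
@[simp] lemma cv_cxy_x0 : cxy K (xres K 0) = 0 := by
  simp only [cxy, xres, cf_mk]
  simp [sgl, MvPolynomial.coeff_mul_X', MvPolynomial.coeff_X', MvPolynomial.coeff_zero_X,
    MvPolynomial.coeff_one, Finsupp.mem_support_iff, Finsupp.single_apply, Finsupp.ext_iff,
    Fin.forall_fin_succ, Finsupp.single_eq_zero]

omit [CharZero K] in
@[simp] lemma cv_cxy_x1 : cxy K (xres K 1) = 0 := by
  simp only [cxy, xres, cf_mk]
  simp [sgl, MvPolynomial.coeff_mul_X', MvPolynomial.coeff_X', MvPolynomial.coeff_zero_X,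
    MvPolynomial.coeff_one, Finsupp.mem_support_iff, Finsupp.single_apply, Finsupp.ext_iff,
    Fin.forall_fin_succ, Finsupp.single_eq_zero]

omit [CharZero K] in
@[simp] lemma cv_cxy_x2 : cxy K (xres K 2) = 0 := by
  simp only [cxy, xres, cf_mk]
  simp [sgl, MvPolynomial.coeff_mul_X', MvPolynomial.coeff_X', MvPolynomial.coeff_zero_X,
    MvPolynomial.coeff_one, Finsupp.mem_support_iff, Finsupp.single_apply, Finsupp.ext_iff,
    Fin.forall_fin_succ, Finsupp.single_eq_zero]

omit [CharZero K] in
@[simp] lemma cv_cxy_w01 : cxy K (w01 K) = 1 := by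
  simp only [cxy, w01, cf_mk]
  simp [sgl, MvPolynomial.coeff_mul_X', MvPolynomial.coeff_X', MvPolynomial.coeff_zero_X,
    MvPolynomial.coeff_one, Finsupp.mem_support_iff, Finsupp.single_apply, Finsupp.ext_iff,
    Fin.forall_fin_succ, Finsupp.single_eq_zero]

omit [CharZero K] in
@[simp] lemma cv_cxy_w02 : cxy K (w02 K) = 0 := by
  simp only [cxy, w02, cf_mk]
  simp [sgl, MvPolynomial.coeff_mul_X', MvPolynomial.coeff_X', MvPolynomial.coeff_zero_X,
    MvPolynomial.coeff_one, Finsupp.mem_support_iff, Finsupp.single_apply, Finsupp.ext_iff,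
    Fin.forall_fin_succ, Finsupp.single_eq_zero]

omit [CharZero K] in
@[simp] lemma cv_cxy_w12 : cxy K (w12 K) = 0 := by
  simp only [cxy, w12, cf_mk]
  simp [sgl, MvPolynomial.coeff_mul_X', MvPolynomial.coeff_X', MvPolynomial.coeff_zero_X,
    MvPolynomial.coeff_one, Finsupp.mem_support_iff, Finsupp.single_apply, Finsupp.ext_iff,
    Fin.forall_fin_succ, Finsupp.single_eq_zero]

omit [CharZero K] in
@[simp] lemma cv_cxy_w012 : cxy K (w012 K) = 0 := by
  simp only [cxy, w012, cf_mk]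
  simp [sgl, MvPolynomial.coeff_mul_X', MvPolynomial.coeff_X', MvPolynomial.coeff_zero_X,
    MvPolynomial.coeff_one, Finsupp.mem_support_iff, Finsupp.single_apply, Finsupp.ext_iff,
    Fin.forall_fin_succ, Finsupp.single_eq_zero]

omit [CharZero K] in
@[simp] lemma cv_cxz_one : cxz K ((1 : TruncPoly3 K)) = 0 := by
  simp only [cxz, one_mk, cf_mk]
  simp [sgl, MvPolynomial.coeff_mul_X', MvPolynomial.coeff_X', MvPolynomial.coeff_zero_X,
    MvPolynomial.coeff_one, Finsupp.mem_support_iff, Finsupp.single_apply, Finsupp.ext_iff,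
    Fin.forall_fin_succ, Finsupp.single_eq_zero]

omit [CharZero K] in
@[simp] lemma cv_cxz_x0 : cxz K (xres K 0) = 0 := by
  simp only [cxz, xres, cf_mk]
  simp [sgl, MvPolynomial.coeff_mul_X', MvPolynomial.coeff_X', MvPolynomial.coeff_zero_X,
    MvPolynomial.coeff_one, Finsupp.mem_support_iff, Finsupp.single_apply, Finsupp.ext_iff,
    Fin.forall_fin_succ, Finsupp.single_eq_zero]

omit [CharZero K] in
@[simp] lemma cv_cxz_x1 : cxz K (xres K 1) = 0 := by
  simp only [cxz, xres, cf_mk]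
  simp [sgl, MvPolynomial.coeff_mul_X', MvPolynomial.coeff_X', MvPolynomial.coeff_zero_X,
    MvPolynomial.coeff_one, Finsupp.mem_support_iff, Finsupp.single_apply, Finsupp.ext_iff,
    Fin.forall_fin_succ, Finsupp.single_eq_zero]

omit [CharZero K] in
@[simp] lemma cv_cxz_x2 : cxz K (xres K 2) = 0 := by
  simp only [cxz, xres, cf_mk]
  simp [sgl, MvPolynomial.coeff_mul_X', MvPolynomial.coeff_X', MvPolynomial.coeff_zero_X,
    MvPolynomial.coeff_one, Finsupp.mem_support_iff, Finsupp.single_apply, Finsupp.ext_iff,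
    Fin.forall_fin_succ, Finsupp.single_eq_zero]

omit [CharZero K] in
@[simp] lemma cv_cxz_w01 : cxz K (w01 K) = 0 := by
  simp only [cxz, w01, cf_mk]
  simp [sgl, MvPolynomial.coeff_mul_X', MvPolynomial.coeff_X', MvPolynomial.coeff_zero_X,
    MvPolynomial.coeff_one, Finsupp.mem_support_iff, Finsupp.single_apply, Finsupp.ext_iff,
    Fin.forall_fin_succ, Finsupp.single_eq_zero]

omit [CharZero K] in
@[simp] lemma cv_cxz_w02 : cxz K (w02 K) = 1 := by
  simp only [cxz, w02, cf_mk]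
  simp [sgl, MvPolynomial.coeff_mul_X', MvPolynomial.coeff_X', MvPolynomial.coeff_zero_X,
    MvPolynomial.coeff_one, Finsupp.mem_support_iff, Finsupp.single_apply, Finsupp.ext_iff,
    Fin.forall_fin_succ, Finsupp.single_eq_zero]

omit [CharZero K] in
@[simp] lemma cv_cxz_w12 : cxz K (w12 K) = 0 := by
  simp only [cxz, w12, cf_mk]
  simp [sgl, MvPolynomial.coeff_mul_X', MvPolynomial.coeff_X', MvPolynomial.coeff_zero_X,
    MvPolynomial.coeff_one, Finsupp.mem_support_iff, Finsupp.single_apply, Finsupp.ext_iff,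
    Fin.forall_fin_succ, Finsupp.single_eq_zero]

omit [CharZero K] in
@[simp] lemma cv_cxz_w012 : cxz K (w012 K) = 0 := by
  simp only [cxz, w012, cf_mk]
  simp [sgl, MvPolynomial.coeff_mul_X', MvPolynomial.coeff_X', MvPolynomial.coeff_zero_X,
    MvPolynomial.coeff_one, Finsupp.mem_support_iff, Finsupp.single_apply, Finsupp.ext_iff,
    Fin.forall_fin_succ, Finsupp.single_eq_zero]

omit [CharZero K] in
@[simp] lemma cv_cyz_one : cyz K ((1 : TruncPoly3 K)) = 0 := by
  simp only [cyz, one_mk, cf_mk]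
  simp [sgl, MvPolynomial.coeff_mul_X', MvPolynomial.coeff_X', MvPolynomial.coeff_zero_X,
    MvPolynomial.coeff_one, Finsupp.mem_support_iff, Finsupp.single_apply, Finsupp.ext_iff,
    Fin.forall_fin_succ, Finsupp.single_eq_zero]

omit [CharZero K] in
@[simp] lemma cv_cyz_x0 : cyz K (xres K 0) = 0 := by
  simp only [cyz, xres, cf_mk]
  simp [sgl, MvPolynomial.coeff_mul_X', MvPolynomial.coeff_X', MvPolynomial.coeff_zero_X,
    MvPolynomial.coeff_one, Finsupp.mem_support_iff, Finsupp.single_apply, Finsupp.ext_iff,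
    Fin.forall_fin_succ, Finsupp.single_eq_zero]

omit [CharZero K] in
@[simp] lemma cv_cyz_x1 : cyz K (xres K 1) = 0 := by
  simp only [cyz, xres, cf_mk]
  simp [sgl, MvPolynomial.coeff_mul_X', MvPolynomial.coeff_X', MvPolynomial.coeff_zero_X,
    MvPolynomial.coeff_one, Finsupp.mem_support_iff, Finsupp.single_apply, Finsupp.ext_iff,
    Fin.forall_fin_succ, Finsupp.single_eq_zero]

omit [CharZero K] in
@[simp] lemma cv_cyz_x2 : cyz K (xres K 2) = 0 := by
  simp only [cyz, xres, cf_mk]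
  simp [sgl, MvPolynomial.coeff_mul_X', MvPolynomial.coeff_X', MvPolynomial.coeff_zero_X,
    MvPolynomial.coeff_one, Finsupp.mem_support_iff, Finsupp.single_apply, Finsupp.ext_iff,
    Fin.forall_fin_succ, Finsupp.single_eq_zero]

omit [CharZero K] in
@[simp] lemma cv_cyz_w01 : cyz K (w01 K) = 0 := by
  simp only [cyz, w01, cf_mk]
  simp [sgl, MvPolynomial.coeff_mul_X', MvPolynomial.coeff_X', MvPolynomial.coeff_zero_X,
    MvPolynomial.coeff_one, Finsupp.mem_support_iff, Finsupp.single_apply, Finsupp.ext_iff,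
    Fin.forall_fin_succ, Finsupp.single_eq_zero]

omit [CharZero K] in
@[simp] lemma cv_cyz_w02 : cyz K (w02 K) = 0 := by
  simp only [cyz, w02, cf_mk]
  simp [sgl, MvPolynomial.coeff_mul_X', MvPolynomial.coeff_X', MvPolynomial.coeff_zero_X,
    MvPolynomial.coeff_one, Finsupp.mem_support_iff, Finsupp.single_apply, Finsupp.ext_iff,
    Fin.forall_fin_succ, Finsupp.single_eq_zero]

omit [CharZero K] in
@[simp] lemma cv_cyz_w12 : cyz K (w12 K) = 1 := by
  simp only [cyz, w12, cf_mk]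
  simp [sgl, MvPolynomial.coeff_mul_X', MvPolynomial.coeff_X', MvPolynomial.coeff_zero_X,
    MvPolynomial.coeff_one, Finsupp.mem_support_iff, Finsupp.single_apply, Finsupp.ext_iff,
    Fin.forall_fin_succ, Finsupp.single_eq_zero]

omit [CharZero K] in
@[simp] lemma cv_cyz_w012 : cyz K (w012 K) = 0 := by
  simp only [cyz, w012, cf_mk]
  simp [sgl, MvPolynomial.coeff_mul_X', MvPolynomial.coeff_X', MvPolynomial.coeff_zero_X,
    MvPolynomial.coeff_one, Finsupp.mem_support_iff, Finsupp.single_apply, Finsupp.ext_iff,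
    Fin.forall_fin_succ, Finsupp.single_eq_zero]

omit [CharZero K] in
@[simp] lemma cv_cxyz_one : cxyz K ((1 : TruncPoly3 K)) = 0 := by
  simp only [cxyz, one_mk, cf_mk]
  simp [sgl, MvPolynomial.coeff_mul_X', MvPolynomial.coeff_X', MvPolynomial.coeff_zero_X,
    MvPolynomial.coeff_one, Finsupp.mem_support_iff, Finsupp.single_apply, Finsupp.ext_iff,
    Fin.forall_fin_succ, Finsupp.single_eq_zero]

omit [CharZero K] in
@[simp] lemma cv_cxyz_x0 : cxyz K (xres K 0) = 0 := by
  simp only [cxyz, xres, cf_mk]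
  simp [sgl, MvPolynomial.coeff_mul_X', MvPolynomial.coeff_X', MvPolynomial.coeff_zero_X,
    MvPolynomial.coeff_one, Finsupp.mem_support_iff, Finsupp.single_apply, Finsupp.ext_iff,
    Fin.forall_fin_succ, Finsupp.single_eq_zero]

omit [CharZero K] in
@[simp] lemma cv_cxyz_x1 : cxyz K (xres K 1) = 0 := by
  simp only [cxyz, xres, cf_mk]
  simp [sgl, MvPolynomial.coeff_mul_X', MvPolynomial.coeff_X', MvPolynomial.coeff_zero_X,
    MvPolynomial.coeff_one, Finsupp.mem_support_iff, Finsupp.single_apply, Finsupp.ext_iff,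
    Fin.forall_fin_succ, Finsupp.single_eq_zero]

omit [CharZero K] in
@[simp] lemma cv_cxyz_x2 : cxyz K (xres K 2) = 0 := by
  simp only [cxyz, xres, cf_mk]
  simp [sgl, MvPolynomial.coeff_mul_X', MvPolynomial.coeff_X', MvPolynomial.coeff_zero_X,
    MvPolynomial.coeff_one, Finsupp.mem_support_iff, Finsupp.single_apply, Finsupp.ext_iff,
    Fin.forall_fin_succ, Finsupp.single_eq_zero]

omit [CharZero K] in
@[simp] lemma cv_cxyz_w01 : cxyz K (w01 K) = 0 := by
  simp only [cxyz, w01, cf_mk]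
  simp [sgl, MvPolynomial.coeff_mul_X', MvPolynomial.coeff_X', MvPolynomial.coeff_zero_X,
    MvPolynomial.coeff_one, Finsupp.mem_support_iff, Finsupp.single_apply, Finsupp.ext_iff,
    Fin.forall_fin_succ, Finsupp.single_eq_zero]

omit [CharZero K] in
@[simp] lemma cv_cxyz_w02 : cxyz K (w02 K) = 0 := by
  simp only [cxyz, w02, cf_mk]
  simp [sgl, MvPolynomial.coeff_mul_X', MvPolynomial.coeff_X', MvPolynomial.coeff_zero_X,
    MvPolynomial.coeff_one, Finsupp.mem_support_iff, Finsupp.single_apply, Finsupp.ext_iff,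
    Fin.forall_fin_succ, Finsupp.single_eq_zero]

omit [CharZero K] in
@[simp] lemma cv_cxyz_w12 : cxyz K (w12 K) = 0 := by
  simp only [cxyz, w12, cf_mk]
  simp [sgl, MvPolynomial.coeff_mul_X', MvPolynomial.coeff_X', MvPolynomial.coeff_zero_X,
    MvPolynomial.coeff_one, Finsupp.mem_support_iff, Finsupp.single_apply, Finsupp.ext_iff,
    Fin.forall_fin_succ, Finsupp.single_eq_zero]

omit [CharZero K] in
@[simp] lemma cv_cxyz_w012 : cxyz K (w012 K) = 1 := by
  simp only [cxyz, w012, cf_mk]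
  simp [sgl, MvPolynomial.coeff_mul_X', MvPolynomial.coeff_X', MvPolynomial.coeff_zero_X,
    MvPolynomial.coeff_one, Finsupp.mem_support_iff, Finsupp.single_apply, Finsupp.ext_iff,
    Fin.forall_fin_succ, Finsupp.single_eq_zero]

lemma phi_eps (a : ExteriorAlgebra K (Fin 3 → K)) : phi K (eps K a) = a := by
  have ha : a ∈ SpanS K := by rw [spanS_top]; exact Submodule.mem_top
  induction ha using Submodule.span_induction with
  | zero => rw [map_zero, map_zero]
  | add x y _ _ ihx ihy => rw [map_add, map_add, ihx, ihy]
  | smul c x _ ih => rw [map_smul, map_smul, ih]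
  | mem g hgmem =>
    simp only [Set.mem_insert_iff, Set.mem_singleton_iff] at hgmem
    rcases hgmem with rfl | rfl | rfl | rfl | rfl | rfl | rfl | rfl
    · rw [map_one]
      simp [phi, Matrix.one_apply]
    · rw [eps_e0]
      simp [phi, MA]
    · rw [eps_e1]
      simp [phi, MB, two_mul_res]
    · rw [eps_e2]
      simp [phi, MC, two_mul_res]
    · rw [eps_e01]
      simp [phi]
    · rw [eps_e02]
      simp [phi]
    · rw [eps_e12]
      simp [phi]
    · rw [eps_e012]
      simp [phi]

/-- The assignments `v₁ ↦ [[0,x],[x,0]]`, `v₂ ↦ [[y,2y],[−2y,−y]]`,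
`v₃ ↦ [[−2z,−z],[z,2z]]` extend to an injective `K`-algebra homomorphism
`E⁽³⁾ → M₂(K[x,y,z]/(x²,y²,z²))` which sends `v₁v₂v₃` to `3xyz·I₂` and hence is not a
constant-trace representation. -/
theorem stmt_11 :
    ∃ ε : ExteriorAlgebra K (Fin 3 → K) →ₐ[K] Matrix (Fin 2) (Fin 2) (TruncPoly3 K),
      Function.Injective ε ∧
      ε (ExteriorAlgebra.ι K ((Pi.single 0 1 : Fin 3 → K))) =
        !![0, xres K 0; xres K 0, 0] ∧
      ε (ExteriorAlgebra.ι K ((Pi.single 1 1 : Fin 3 → K))) =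
        !![xres K 1, 2 * xres K 1; -(2 * xres K 1), -(xres K 1)] ∧
      ε (ExteriorAlgebra.ι K ((Pi.single 2 1 : Fin 3 → K))) =
        !![-(2 * xres K 2), -(xres K 2); xres K 2, 2 * xres K 2] ∧
      ε (ExteriorAlgebra.ι K ((Pi.single 0 1 : Fin 3 → K)) *
          ExteriorAlgebra.ι K ((Pi.single 1 1 : Fin 3 → K)) *
          ExteriorAlgebra.ι K ((Pi.single 2 1 : Fin 3 → K))) =
        (3 * xres K 0 * xres K 1 * xres K 2) • (1 : Matrix (Fin 2) (Fin 2) (TruncPoly3 K)) ∧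
      ¬ (∀ g, ∃ k : K, Matrix.trace (ε g) = algebraMap K (TruncPoly3 K) k) := by
  refine ⟨eps K, ?_, eps_e0 K, eps_e1 K, eps_e2 K, ?_, ?_⟩
  · intro a b h
    rw [← phi_eps K a, ← phi_eps K b, h]
  · have h012 := eps_e012 K
    rw [show (ExteriorAlgebra.ι K ((Pi.single 0 1 : Fin 3 → K)) *
        ExteriorAlgebra.ι K ((Pi.single 1 1 : Fin 3 → K)) *
        ExteriorAlgebra.ι K ((Pi.single 2 1 : Fin 3 → K))) = ee K 0 * ee K 1 * ee K 2 from rfl,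
      h012]
    ext i j
    fin_cases i <;> fin_cases j <;>
      simp [Matrix.one_apply, Algebra.smul_def, map_ofNat, ← xres_mul012] <;> ring
  · intro h
    obtain ⟨k, hk⟩ := h (ee K 0 * ee K 1 * ee K 2)
    rw [eps_e012 K] at hk
    rw [Matrix.trace_fin_two] at hk
    have := congrArg (cxyz K) hk
    rw [Algebra.algebraMap_eq_smul_one] at this
    simp only [Matrix.cons_val', Matrix.cons_val_zero, Matrix.cons_val_one, Matrix.head_cons,
      Matrix.head_fin_const, Matrix.empty_val', Matrix.cons_val_fin_one, map_add, map_smul,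
      smul_eq_mul, cv_cxyz_w012, cv_cxyz_one, mul_one, mul_zero] at this
    norm_num at this
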